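/- Let G be a finite connected balanced bipartite graph and let S ⊊ V be a proper subset of the vertex set. Then L is strictly concave on the face Δ_S = {v ∈ Δ : v_i = 0 if and only if i ∉ S}: for all v, w ∈ Δ_S with v ≠ w and all t ∈ (0,1), L(tv + (1−t)w) > t L(v) + (1−t) L(w). -/

import Mathlib

open Finset

/-- `v_i + v_j` as a function of the unordered pair `{i,j}`. -/
noncomputable def pairSum {m : ℕ} (v : Fin m → ℝ) : Sym2 (Fin m) → ℝ :=
  Sym2.lift ⟨fun i j => v i + v j, fun i j => add_comm (v i) (v j)⟩

/-- The domain `Δ`. -/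
def urnDomain {m : ℕ} (G : SimpleGraph (Fin m)) (c : ℝ) : Set (Fin m → ℝ) :=
  {v | (∀ i, 0 ≤ v i) ∧ (∑ i, v i) = 1 ∧ ∀ i j, G.Adj i j → c ≤ v i + v j}

/-- The face `Δ_S = {v ∈ Δ : v_i = 0 iff i ∉ S}`. -/
def urnFace {m : ℕ} (G : SimpleGraph (Fin m)) (c : ℝ) (S : Finset (Fin m)) :
    Set (Fin m → ℝ) :=
  {v ∈ urnDomain G c | ∀ i, v i = 0 ↔ i ∉ S}

/-- The function `L(v) = -Σ_i v_i + (1/N) Σ_{{i,j} ∈ E} log (v_i + v_j)`. -/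
noncomputable def lyap {m : ℕ} (G : SimpleGraph (Fin m)) [DecidableRel G.Adj] (N : ℕ)
    (v : Fin m → ℝ) : ℝ :=
  -∑ i, v i + (1 / (N : ℝ)) * ∑ e ∈ G.edgeFinset, Real.log (pairSum v e)

lemma pairSum_combo {m : ℕ} (v w : Fin m → ℝ) (t : ℝ) (e : Sym2 (Fin m)) :
    pairSum (t • v + (1 - t) • w) e = t * pairSum v e + (1 - t) * pairSum w e := by
  induction e using Sym2.ind with
  | _ i j => simp [pairSum]; ring

lemma pairSum_lb {m : ℕ} {G : SimpleGraph (Fin m)} [DecidableRel G.Adj] {c : ℝ}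
    {v : Fin m → ℝ} (hv : ∀ i j, G.Adj i j → c ≤ v i + v j) :
    ∀ e ∈ G.edgeFinset, c ≤ pairSum v e := by
  intro e he
  induction e using Sym2.ind with
  | _ i j =>
    rw [SimpleGraph.mem_edgeFinset, SimpleGraph.mem_edgeSet] at he
    simpa [pairSum] using hv i j he

/-- If `G` is a finite connected balanced bipartite graph and `S ⊊ V`, then
`L` is strictly concave on the face `Δ_S`. -/
theorem lyap_strictly_concave_on_proper_face
    {m : ℕ} (hm : 2 ≤ m) (G : SimpleGraph (Fin m)) [DecidableRel G.Adj]
    (hconn : G.Connected)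
    (A : Finset (Fin m)) (hbip : ∀ i j, G.Adj i j → (i ∈ A ↔ j ∉ A)) (hbal : 2 * A.card = m)
    (N : ℕ) (hN : N = G.edgeFinset.card)
    (c : ℝ) (hc0 : 0 < c) (hc1 : c < 1 / (N : ℝ))
    (S : Finset (Fin m)) (hS : S ≠ Finset.univ) :
    ∀ v ∈ urnFace G c S, ∀ w ∈ urnFace G c S, v ≠ w → ∀ t : ℝ, 0 < t → t < 1 →
      t * lyap G N v + (1 - t) * lyap G N w < lyap G N (t • v + (1 - t) • w) := by
  intro v hv w hw hvw t ht0 ht1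
  obtain ⟨⟨hvnn, hvsum, hvedge⟩, hvzero⟩ := hv
  obtain ⟨⟨hwnn, hwsum, hwedge⟩, hwzero⟩ := hw
  -- N > 0
  have hNpos : 0 < (N : ℝ) := by
    rcases Nat.eq_zero_or_pos N with h | h
    · rw [h] at hc1; simp at hc1; linarith
    · exact_mod_cast h
  have hNinv : 0 < 1 / (N : ℝ) := by positivity
  -- the sum of the convex combination is 1
  have hcsum : (∑ i, (t • v + (1 - t) • w) i) = 1 := by
    simp only [Pi.add_apply, Pi.smul_apply, smul_eq_mul]
    rw [Finset.sum_add_distrib, ← Finset.mul_sum, ← Finset.mul_sum, hvsum, hwsum]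
    ring
  -- find an edge where pairSum differs
  have hex : ∃ e ∈ G.edgeFinset, pairSum v e ≠ pairSum w e := by
    by_contra h
    push_neg at h
    have hflip : ∀ i j, G.Adj i j → v j - w j = -(v i - w i) := by
      intro i j hij
      have := h s(i, j) (by rwa [SimpleGraph.mem_edgeFinset, SimpleGraph.mem_edgeSet])
      simp only [pairSum, Sym2.lift_mk] at this
      linarith
    obtain ⟨k, hk⟩ : ∃ k, k ∉ S := by
      by_contra h'
      push_neg at h'
      exact hS (Finset.eq_univ_iff_forall.mpr h')
    have hk0 : v k = w k := by
      rw [(hvzero k).mpr hk, (hwzero k).mpr hk]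
    -- along any walk, equality propagates (up to sign, starting from 0)
    have hwalk : ∀ a b : Fin m, G.Walk a b → v a = w a → v b = w b := by
      intro a b p
      induction p with
      | nil => exact fun h => h
      | cons hadj p ih =>
        intro hab
        apply ih
        have := hflip _ _ hadj
        linarith
    have : v = w := by
      funext j
      exact hwalk k j (hconn k j).some hk0
    exact hvw this
  obtain ⟨e₀, he₀, hne₀⟩ := hex
  -- key log sum inequality
  have hlogkey :
      (∑ e ∈ G.edgeFinset, (t * Real.log (pairSum v e) + (1 - t) * Real.log (pairSum w e)))
        < ∑ e ∈ G.edgeFinset, Real.log (pairSum (t • v + (1 - t) • w) e) := by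
    apply Finset.sum_lt_sum
    · intro e he
      have ha : (0 : ℝ) < pairSum v e := lt_of_lt_of_le hc0 (pairSum_lb hvedge e he)
      have hb : (0 : ℝ) < pairSum w e := lt_of_lt_of_le hc0 (pairSum_lb hwedge e he)
      have := strictConcaveOn_log_Ioi.concaveOn.2 (Set.mem_Ioi.mpr ha)
        (Set.mem_Ioi.mpr hb) ht0.le (by linarith : (0:ℝ) ≤ 1 - t) (by ring)
      rw [pairSum_combo]
      simpa using this
    · refine ⟨e₀, he₀, ?_⟩
      have ha : (0 : ℝ) < pairSum v e₀ := lt_of_lt_of_le hc0 (pairSum_lb hvedge e₀ he₀)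
      have hb : (0 : ℝ) < pairSum w e₀ := lt_of_lt_of_le hc0 (pairSum_lb hwedge e₀ he₀)
      have := strictConcaveOn_log_Ioi.2 (Set.mem_Ioi.mpr ha)
        (Set.mem_Ioi.mpr hb) hne₀ ht0 (by linarith : (0:ℝ) < 1 - t) (by ring)
      rw [pairSum_combo]
      simpa using this
  -- conclude
  unfold lyap
  rw [hvsum, hwsum, hcsum]
  have hdist :
      t * ∑ e ∈ G.edgeFinset, Real.log (pairSum v e)
        + (1 - t) * ∑ e ∈ G.edgeFinset, Real.log (pairSum w e)
      = ∑ e ∈ G.edgeFinset,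
          (t * Real.log (pairSum v e) + (1 - t) * Real.log (pairSum w e)) := by
    rw [Finset.sum_add_distrib, Finset.mul_sum, Finset.mul_sum]
  nlinarith [mul_lt_mul_of_pos_left hlogkey hNinv,
    mul_le_mul_of_nonneg_left (le_of_eq hdist) (le_of_lt hNinv)]
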